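/- Let z be a complex number with nonnegative real part and |z| ≤ ρ for some ρ > 0, and let ℓ ≥ 3 be an odd integer. Then Re(z^ℓ) ≤ ℓ·ρ^(ℓ-1)·Re(z), with equality if and only if Re(z) = 0. -/

import Mathlib

lemma aux_zero (z : ℂ) (hre : z.re = 0) (m : ℕ) : (z ^ (2*m+1)).re = 0 := by
  induction m with
  | zero => simpa using hre
  | succ n ih =>
    have h : z ^ (2*(n+1)+1) = z ^ (2*n+1) * (z*z) := by ring
    rw [h]
    simp [Complex.mul_re, Complex.mul_im, ih, hre]

lemma aux_strict (z : ℂ) (ρ : ℝ) (hρ : 0 < ρ) (hre : 0 < z.re)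
    (habs : ‖z‖ ≤ ρ) (k : ℕ) :
    |(z ^ (2*k+3)).re| < (2*k+3) * ρ ^ (2*k+2) * z.re := by
  have hx : z.re ≤ ρ := le_trans (le_trans (le_abs_self _) (Complex.abs_re_le_norm z)) habs
  have hy : |z.im| ≤ ρ := le_trans (Complex.abs_im_le_norm z) habs
  have hy' : z.im ^ 2 ≤ ρ ^ 2 := by
    have := abs_nonneg z.im
    nlinarith [sq_abs z.im]
  have hx2 : z.re ^ 2 ≤ ρ ^ 2 := by nlinarith
  induction k with
  | zero =>
    have h3re : (z ^ 3).re = z.re^3 - 3*z.re*z.im^2 := by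
      have : z ^ 3 = z * z * z := by ring
      rw [this]
      simp [Complex.mul_re, Complex.mul_im]
      ring
    rw [abs_lt]
    constructor <;>
    · simp only [h3re]
      push_cast
      nlinarith [mul_nonneg hre.le (sub_nonneg.2 hy'), mul_nonneg hre.le (sub_nonneg.2 hx2),
        mul_pos hρ (mul_pos hρ hre), pow_pos hre 3]
  | succ n ih =>
    have key : z ^ (2*(n+1)+3) = z ^ (2*n+3) * (z*z) := by ring
    have him : |(z ^ (2*n+3)).im| ≤ ρ ^ (2*n+3) := by
      calc |(z ^ (2*n+3)).im| ≤ ‖z ^ (2*n+3)‖ := Complex.abs_im_le_norm _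
        _ = ‖z‖ ^ (2*n+3) := by rw [norm_pow]
        _ ≤ ρ ^ (2*n+3) := pow_le_pow_left₀ (norm_nonneg z) habs _
    have hzz_re : |(z*z).re| ≤ ρ ^ 2 := by
      rw [Complex.mul_re, abs_le]
      constructor <;> nlinarith
    have hre2 : (z ^ (2*(n+1)+3)).re =
        (z ^ (2*n+3)).re * (z*z).re - (z ^ (2*n+3)).im * (z*z).im := by
      rw [key, Complex.mul_re]
    have hzz_im : |(z*z).im| = 2 * z.re * |z.im| := by
      have h : (z*z).im = 2 * z.re * z.im := by rw [Complex.mul_im]; ring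
      rw [h, abs_mul, abs_mul]
      simp [abs_of_pos hre]
    have step1 : |(z ^ (2*(n+1)+3)).re| ≤
        |(z ^ (2*n+3)).re| * ρ^2 + ρ ^ (2*n+3) * (2 * z.re * |z.im|) := by
      rw [hre2]
      calc |(z ^ (2*n+3)).re * (z*z).re - (z ^ (2*n+3)).im * (z*z).im|
          ≤ |(z ^ (2*n+3)).re * (z*z).re| + |(z ^ (2*n+3)).im * (z*z).im| :=
            abs_sub _ _
        _ = |(z ^ (2*n+3)).re| * |(z*z).re| + |(z ^ (2*n+3)).im| * |(z*z).im| := by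
            rw [abs_mul, abs_mul]
        _ ≤ |(z ^ (2*n+3)).re| * ρ^2 + ρ ^ (2*n+3) * (2 * z.re * |z.im|) :=
            add_le_add (mul_le_mul_of_nonneg_left hzz_re (abs_nonneg _))
              (mul_le_mul him hzz_im.le (abs_nonneg _) (by positivity))
    have h1 : |(z ^ (2*n+3)).re| * ρ^2 < (2*n+3) * ρ^(2*n+2) * z.re * ρ^2 := by
      have := ih
      nlinarith [pow_pos hρ 2]
    have h2 : ρ ^ (2*n+3) * (2 * z.re * |z.im|) ≤ ρ^(2*n+3) * (2 * z.re * ρ) := by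
      gcongr
    calc |(z ^ (2*(n+1)+3)).re|
        ≤ |(z ^ (2*n+3)).re| * ρ^2 + ρ ^ (2*n+3) * (2 * z.re * |z.im|) := step1
      _ < (2*n+3) * ρ^(2*n+2) * z.re * ρ^2 + ρ^(2*n+3) * (2 * z.re * ρ) :=
          add_lt_add_of_lt_of_le h1 h2
      _ = (2*((n+1:ℕ):ℝ)+3) * ρ^(2*(n+1)+2) * z.re := by push_cast; ring

theorem stmt_0 (z : ℂ) (ρ : ℝ) (ℓ : ℕ) (hℓ : 3 ≤ ℓ) (hodd : Odd ℓ)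
    (hρ : 0 < ρ) (hre : 0 ≤ z.re) (habs : ‖z‖ ≤ ρ) :
    (z ^ ℓ).re ≤ ℓ * ρ ^ (ℓ - 1) * z.re ∧
      ((z ^ ℓ).re = ℓ * ρ ^ (ℓ - 1) * z.re ↔ z.re = 0) := by
  obtain ⟨m, hm⟩ := hodd
  rcases hre.eq_or_lt with h0 | h0
  · have hz : (z ^ ℓ).re = 0 := by
      rw [hm]; exact aux_zero z h0.symm m
    rw [hz, ← h0]
    simp
  · have hm1 : 1 ≤ m := by omega
    have hk : ℓ = 2*(m-1)+3 := by omega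
    have hk2 : ℓ - 1 = 2*(m-1)+2 := by omega
    have hs := aux_strict z ρ hρ h0 habs (m-1)
    rw [← hk, ← hk2] at hs
    have hcast : (ℓ : ℝ) = 2*((m-1 : ℕ) : ℝ)+3 := by
      rw [hk]; push_cast; ring
    rw [← hcast] at hs
    have hlt : (z ^ ℓ).re < ℓ * ρ ^ (ℓ - 1) * z.re :=
      lt_of_le_of_lt (le_abs_self _) hs
    exact ⟨hlt.le, ⟨fun h => absurd h hlt.ne, fun h => absurd h h0.ne'⟩⟩
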